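/- For every partition λ = (λ₁, …, λ_l) of length l ≥ 1, F_{(λ₁,…,λ_l)} = t^{λ₂ + ⋯ + λ_l} · F_{(λ₂,…,λ_l)} in ℤ[t]. -/

import Mathlib

open Finset Polynomial

/-- `F_λ ∈ ℤ[t]`: the coefficient of `z^{|λ|} w₁^{λ₁} ⋯ w_l^{λ_l}` in the formal product
`∏_{i=1}^{l} (Σ_{k≥0} z^k wᵢ^k) · ∏_{1≤i<j≤l} (1 − w_j/wᵢ)(Σ_{k≥0} t^k (w_j/wᵢ)^k)`.
It is computed by expanding the product: `km.1 i` is the exponent chosen from the `i`-th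
factor `Σ_k z^k wᵢ^k`, and for a pair `p = (i,j)` with `i < j`, `km.2 p` is the exponent of
the ratio `w_j/wᵢ`, whose coefficient in `(1 − w_j/wᵢ)(Σ_k t^k (w_j/wᵢ)^k)` is `1` for
exponent `0` and `t^k − t^{k−1}` for exponent `k ≥ 1`.  Only finitely many terms contribute,
so the `finsum` is the honest coefficient. -/
noncomputable def Fhl (lam : List ℕ) : Polynomial ℤ :=
  ∑ᶠ km : (Fin lam.length → ℕ) × (Fin lam.length × Fin lam.length → ℕ),
    if (∀ p : Fin lam.length × Fin lam.length, ¬ p.1 < p.2 → km.2 p = 0) ∧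
        (∑ i, km.1 i) = lam.sum ∧
        (∀ i : Fin lam.length,
          (km.1 i : ℤ) + (∑ j, if j < i then (km.2 (j, i) : ℤ) else 0)
            - (∑ j, if i < j then (km.2 (i, j) : ℤ) else 0) = (lam.get i : ℤ))
      then ∏ p : Fin lam.length × Fin lam.length,
        (if p.1 < p.2 then
          (if km.2 p = 0 then 1 else X ^ (km.2 p) - X ^ (km.2 p - 1)) else 1)
      else 0


open scoped Classical

noncomputable section FhlAux
variable {N : ℕ}

def cc (a : ℕ) : Polynomial ℤ := if a = 0 then 1 else X ^ a - X ^ (a - 1)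

def inn (m : Fin N × Fin N → ℕ) (i : Fin N) : ℤ := ∑ j, if j < i then (m (j, i) : ℤ) else 0
def outt (m : Fin N × Fin N → ℕ) (i : Fin N) : ℤ := ∑ j, if i < j then (m (i, j) : ℤ) else 0
def Upper (m : Fin N × Fin N → ℕ) : Prop := ∀ p : Fin N × Fin N, ¬ p.1 < p.2 → m p = 0
def Pc (τ : Fin N → ℤ) (km : (Fin N → ℕ) × (Fin N × Fin N → ℕ)) : Prop :=
  Upper km.2 ∧ ∀ i, (km.1 i : ℤ) + inn km.2 i - outt km.2 i = τ i
def Wt (m : Fin N × Fin N → ℕ) : Polynomial ℤ :=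
  ∏ p : Fin N × Fin N, if p.1 < p.2 then cc (m p) else 1
def Sg (τ : Fin N → ℤ) (km : (Fin N → ℕ) × (Fin N × Fin N → ℕ)) : Polynomial ℤ :=
  if Pc τ km then Wt km.2 else 0
def SS (τ : Fin N → ℤ) : Polynomial ℤ := ∑ᶠ km, Sg τ km

lemma sum_swap_lt (v : Fin N × Fin N → ℤ) :
    ∑ i, ∑ j, (if j < i then v (j, i) else 0)
      = ∑ p : Fin N × Fin N, if p.1 < p.2 then v p else 0 := by
  have h1 : (∑ p : Fin N × Fin N, if p.2 < p.1 then v (p.2, p.1) else 0)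
      = ∑ i, ∑ j, (if j < i then v (j, i) else 0) :=
    Fintype.sum_prod_type (f := fun p : Fin N × Fin N => if p.2 < p.1 then v (p.2, p.1) else 0)
  rw [← h1]
  exact Fintype.sum_equiv (Equiv.prodComm _ _) _ _ (by rintro ⟨i, j⟩; rfl)

lemma sum_lt_eq (v : Fin N × Fin N → ℤ) :
    ∑ i, ∑ j, (if i < j then v (i, j) else 0)
      = ∑ p : Fin N × Fin N, if p.1 < p.2 then v p else 0 :=
  (Fintype.sum_prod_type (f := fun p : Fin N × Fin N => if p.1 < p.2 then v p else 0)).symm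

lemma sum_mul_inn (w : Fin N → ℤ) (m : Fin N × Fin N → ℕ) :
    ∑ i, w i * inn m i = ∑ p : Fin N × Fin N, if p.1 < p.2 then w p.2 * (m p : ℤ) else 0 := by
  rw [← sum_swap_lt fun p => w p.2 * (m p : ℤ)]
  refine Finset.sum_congr rfl fun i _ => ?_
  rw [inn, Finset.mul_sum]
  exact Finset.sum_congr rfl fun j _ => by rw [mul_ite, mul_zero]

lemma sum_mul_outt (w : Fin N → ℤ) (m : Fin N × Fin N → ℕ) :
    ∑ i, w i * outt m i = ∑ p : Fin N × Fin N, if p.1 < p.2 then w p.1 * (m p : ℤ) else 0 := by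
  rw [← sum_lt_eq fun p => w p.1 * (m p : ℤ)]
  refine Finset.sum_congr rfl fun i _ => ?_
  rw [outt, Finset.mul_sum]
  exact Finset.sum_congr rfl fun j _ => by rw [mul_ite, mul_zero]

lemma sum_inn_eq_sum_outt (m : Fin N × Fin N → ℕ) :
    ∑ i, inn m i = ∑ i, outt m i := by
  have h1 := sum_mul_inn (fun _ => (1:ℤ)) m
  have h2 := sum_mul_outt (fun _ => (1:ℤ)) m
  simp only [one_mul] at h1 h2
  rw [h1, h2]


lemma Pc_sum {τ : Fin N → ℤ} {k : Fin N → ℕ} {m : Fin N × Fin N → ℕ}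
    (h : ∀ i, (k i : ℤ) + inn m i - outt m i = τ i) :
    ∑ i, (k i : ℤ) = ∑ i, τ i := by
  have : ∑ i, ((k i : ℤ) + inn m i - outt m i) = ∑ i, τ i :=
    Finset.sum_congr rfl fun i _ => h i
  rw [Finset.sum_sub_distrib, Finset.sum_add_distrib, sum_inn_eq_sum_outt] at this
  linarith [this]

lemma Pc_bound {τ : Fin N → ℤ} {k : Fin N → ℕ} {m : Fin N × Fin N → ℕ}
    (h : Pc τ (k, m)) :
    (∀ i, (k i : ℤ) ≤ ∑ i, ((i.1 : ℤ) + 1) * τ i) ∧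
      (∀ p, (m p : ℤ) ≤ ∑ i, ((i.1 : ℤ) + 1) * τ i) := by
  obtain ⟨hu, hb⟩ := h
  set A : ℤ := ∑ i, ((i.1 : ℤ) + 1) * (k i : ℤ) with hA
  set B : ℤ := ∑ p : Fin N × Fin N,
      (if p.1 < p.2 then ((p.2.1 : ℤ) - (p.1.1 : ℤ)) * (m p : ℤ) else 0) with hB
  have key : ∑ i, ((i.1 : ℤ) + 1) * τ i = A + B := by
    have e1 : ∑ i, ((i.1 : ℤ) + 1) * τ i
        = ∑ i, (((i.1 : ℤ) + 1) * (k i : ℤ)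
            + (((i.1 : ℤ) + 1) * inn m i - ((i.1 : ℤ) + 1) * outt m i)) := by
      refine Finset.sum_congr rfl fun i _ => ?_
      rw [← hb i]; ring
    rw [e1, Finset.sum_add_distrib, Finset.sum_sub_distrib,
      sum_mul_inn (fun i => ((i : ℕ) : ℤ) + 1), sum_mul_outt (fun i => ((i : ℕ) : ℤ) + 1),
      ← Finset.sum_sub_distrib]
    congr 1
    refine Finset.sum_congr rfl fun p _ => ?_
    by_cases hp : p.1 < p.2 <;> simp [hp] <;> ring
  have hAterm : ∀ i : Fin N, 0 ≤ ((i.1 : ℤ) + 1) * (k i : ℤ) := fun i =>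
    mul_nonneg (by positivity) (by positivity)
  have hBterm : ∀ p : Fin N × Fin N,
      0 ≤ (if p.1 < p.2 then ((p.2.1 : ℤ) - (p.1.1 : ℤ)) * (m p : ℤ) else 0) := by
    intro p
    by_cases hp : p.1 < p.2
    · rw [if_pos hp]
      have : (p.1.1 : ℤ) < (p.2.1 : ℤ) := by exact_mod_cast hp
      exact mul_nonneg (by omega) (by positivity)
    · rw [if_neg hp]
  have hA0 : 0 ≤ A := Finset.sum_nonneg fun i _ => hAterm i
  have hB0 : 0 ≤ B := Finset.sum_nonneg fun p _ => hBterm p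
  constructor
  · intro i
    have h1 : ((i.1 : ℤ) + 1) * (k i : ℤ) ≤ A :=
      Finset.single_le_sum (fun j _ => hAterm j) (Finset.mem_univ i)
    have h2 : (k i : ℤ) ≤ ((i.1 : ℤ) + 1) * (k i : ℤ) := by
      nlinarith [Int.natCast_nonneg i.1, Int.natCast_nonneg (k i)]
    rw [key]; linarith
  · intro p
    by_cases hp : p.1 < p.2
    · have h1 : (if p.1 < p.2 then ((p.2.1 : ℤ) - (p.1.1 : ℤ)) * (m p : ℤ) else 0) ≤ B :=
        Finset.single_le_sum (fun q _ => hBterm q) (Finset.mem_univ p)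
      rw [if_pos hp] at h1
      have hlt : (p.1.1 : ℤ) < (p.2.1 : ℤ) := by exact_mod_cast hp
      have h2 : (m p : ℤ) ≤ ((p.2.1 : ℤ) - (p.1.1 : ℤ)) * (m p : ℤ) := by
        nlinarith [Int.natCast_nonneg (m p)]
      rw [key]; linarith
    · have hm0 : m p = 0 := hu p hp
      rw [hm0, key]
      simp only [Nat.cast_zero]
      linarith

lemma Sg_support_finite (τ : Fin N → ℤ) : (Function.support (Sg τ)).Finite := by
  set C : ℕ := (∑ i, ((i.1 : ℤ) + 1) * τ i).toNat with hC
  apply Set.Finite.subset (Set.Finite.prod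
    (Set.Finite.pi (fun _ : Fin N => Set.finite_Iic C))
    (Set.Finite.pi (fun _ : Fin N × Fin N => Set.finite_Iic C)))
  rintro ⟨k, m⟩ hkm
  have hP : Pc τ (k, m) := by
    by_contra h
    apply hkm
    simp only [Sg, if_neg h]
  obtain ⟨h1, h2⟩ := Pc_bound hP
  constructor
  · intro i _
    have := h1 i
    simp only [Set.mem_Iic]
    omega
  · intro p _
    have := h2 p
    simp only [Set.mem_Iic]
    omega

lemma sum_range_cc (d : ℕ) : ∑ a ∈ Finset.range (d + 1), cc a = X ^ d := by
  induction d with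
  | zero => simp [cc]
  | succ d ih =>
    rw [Finset.sum_range_succ, ih, cc, if_neg (Nat.succ_ne_zero d)]
    ring_nf
    simp

lemma finsum_pair (d : ℤ) :
    ∑ᶠ x : ℕ × ℕ, (if ((x.1 : ℤ) + (x.2 : ℤ) = d) then cc x.1 else 0)
      = if 0 ≤ d then X ^ d.toNat else 0 := by
  by_cases hd : 0 ≤ d
  · rw [if_pos hd]
    have hsub : Function.support (fun x : ℕ × ℕ => if ((x.1 : ℤ) + (x.2 : ℤ) = d) then cc x.1 else 0)
        ⊆ (Finset.HasAntidiagonal.antidiagonal d.toNat : Set (ℕ × ℕ)) := by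
      intro x hx
      have hx' : (x.1 : ℤ) + (x.2 : ℤ) = d := by
        by_contra h
        exact hx (if_neg h)
      rw [Finset.mem_coe, Finset.HasAntidiagonal.mem_antidiagonal]
      omega
    rw [finsum_eq_sum_of_support_subset _ hsub]
    have : ∀ x ∈ Finset.HasAntidiagonal.antidiagonal d.toNat,
        (if ((x.1 : ℤ) + (x.2 : ℤ) = d) then cc x.1 else 0) = cc x.1 := by
      intro x hx
      rw [Finset.HasAntidiagonal.mem_antidiagonal] at hx
      rw [if_pos (by omega)]
    rw [Finset.sum_congr rfl this, Finset.Nat.sum_antidiagonal_eq_sum_range_succ_mk]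
    exact sum_range_cc d.toNat
  · rw [if_neg hd]
    apply finsum_eq_zero_of_forall_eq_zero
    intro x
    rw [if_neg (by omega)]

lemma support_pi_prod {γ : Type} {M : ℕ} (F : Fin M → γ → Polynomial ℤ) :
    Function.support (fun f : Fin M → γ => ∏ i, F i (f i))
      ⊆ Set.pi Set.univ (fun i => Function.support (F i)) := by
  intro f hf i _
  by_contra h0
  rw [Function.mem_support, not_not] at h0
  exact hf (Finset.prod_eq_zero (Finset.mem_univ i) h0)

lemma finsum_pi_prod {γ : Type} : ∀ {M : ℕ} (F : Fin M → γ → Polynomial ℤ),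
    (∀ i, (Function.support (F i)).Finite) →
    ∑ᶠ f : Fin M → γ, ∏ i, F i (f i) = ∏ i, ∑ᶠ x, F i x := by
  intro M
  induction M with
  | zero =>
    intro F hF
    rw [finsum_unique]
    simp
  | succ M ih =>
    intro F hF
    have hsup2 : (Function.support fun f : Fin M → γ => ∏ i, F i.succ (f i)).Finite :=
      Set.Finite.subset (Set.Finite.pi (fun i => hF i.succ)) (support_pi_prod _)
    have key : ∀ p : γ × (Fin M → γ),
        (∏ i, F i ((Fin.consEquiv fun _ => γ) p i)) = F 0 p.1 * ∏ i : Fin M, F i.succ (p.2 i) := by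
      intro p
      rw [Fin.prod_univ_succ]
      simp [Fin.consEquiv]
    calc ∑ᶠ f : Fin (M + 1) → γ, ∏ i, F i (f i)
        = ∑ᶠ p : γ × (Fin M → γ), ∏ i, F i ((Fin.consEquiv fun _ => γ) p i) :=
          (finsum_comp_equiv (Fin.consEquiv fun _ => γ)).symm
      _ = ∑ᶠ p : γ × (Fin M → γ), F 0 p.1 * ∏ i : Fin M, F i.succ (p.2 i) := finsum_congr key
      _ = ∑ᶠ x : γ, ∑ᶠ g : Fin M → γ, F 0 x * ∏ i : Fin M, F i.succ (g i) := by
          apply finsum_curry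
          apply Set.Finite.subset ((hF 0).prod hsup2)
          rintro ⟨x, g⟩ hp
          have hne : F 0 x * ∏ i : Fin M, F i.succ (g i) ≠ 0 := hp
          refine ⟨?_, ?_⟩
          · show F 0 x ≠ 0
            intro h0; exact hne (by rw [h0, zero_mul])
          · show (∏ i : Fin M, F i.succ (g i)) ≠ 0
            intro h0; exact hne (by rw [h0, mul_zero])
      _ = ∑ᶠ x : γ, F 0 x * ∑ᶠ g : Fin M → γ, ∏ i : Fin M, F i.succ (g i) := by
          exact finsum_congr fun x => (mul_finsum _ _).symm
      _ = (∑ᶠ x : γ, F 0 x) * ∑ᶠ g : Fin M → γ, ∏ i : Fin M, F i.succ (g i) :=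
          (finsum_mul _ _).symm
      _ = ∏ i, ∑ᶠ x, F i x := by
          rw [ih _ (fun i => hF i.succ), Fin.prod_univ_succ]

/-! ### Decomposition of a configuration for `Fin (N+1)` -/

def bigM (m' : Fin N × Fin N → ℕ) (m0 mrow : Fin N → ℕ) (e : ℕ) :
    Fin (N + 1) × Fin (N + 1) → ℕ :=
  fun p => Fin.cases (Fin.cases e m0 p.2) (fun i => Fin.cases (mrow i) (fun j => m' (i, j)) p.2) p.1

@[simp] lemma bigM_zz (m' : Fin N × Fin N → ℕ) (m0 mrow : Fin N → ℕ) (e : ℕ) :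
    bigM m' m0 mrow e (0, 0) = e := by simp [bigM]
@[simp] lemma bigM_zs (m' : Fin N × Fin N → ℕ) (m0 mrow : Fin N → ℕ) (e : ℕ) (j : Fin N) :
    bigM m' m0 mrow e (0, j.succ) = m0 j := by simp [bigM]
@[simp] lemma bigM_sz (m' : Fin N × Fin N → ℕ) (m0 mrow : Fin N → ℕ) (e : ℕ) (i : Fin N) :
    bigM m' m0 mrow e (i.succ, 0) = mrow i := by simp [bigM]
@[simp] lemma bigM_ss (m' : Fin N × Fin N → ℕ) (m0 mrow : Fin N → ℕ) (e : ℕ) (i j : Fin N) :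
    bigM m' m0 mrow e (i.succ, j.succ) = m' (i, j) := by simp [bigM]

lemma inn_zero (m : Fin (N + 1) × Fin (N + 1) → ℕ) : inn m 0 = 0 := by
  rw [inn]
  exact Finset.sum_eq_zero fun j _ => if_neg (Fin.not_lt_zero j)

lemma outt_zero (m : Fin (N + 1) × Fin (N + 1) → ℕ) :
    outt m 0 = ∑ j : Fin N, (m (0, j.succ) : ℤ) := by
  rw [outt, Fin.sum_univ_succ, if_neg (lt_irrefl (0 : Fin (N + 1))), zero_add]
  exact Finset.sum_congr rfl fun j _ => if_pos (Fin.succ_pos j)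

lemma inn_succ (m : Fin (N + 1) × Fin (N + 1) → ℕ) (i : Fin N) :
    inn m i.succ = (m (0, i.succ) : ℤ)
      + ∑ j : Fin N, (if j < i then (m (j.succ, i.succ) : ℤ) else 0) := by
  rw [inn, Fin.sum_univ_succ, if_pos (Fin.succ_pos i)]
  congr 1
  exact Finset.sum_congr rfl fun j _ => by simp only [Fin.succ_lt_succ_iff]

lemma outt_succ (m : Fin (N + 1) × Fin (N + 1) → ℕ) (i : Fin N) :
    outt m i.succ = ∑ j : Fin N, (if i < j then (m (i.succ, j.succ) : ℤ) else 0) := by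
  rw [outt, Fin.sum_univ_succ, if_neg (Fin.not_lt_zero i.succ), zero_add]
  exact Finset.sum_congr rfl fun j _ => by simp only [Fin.succ_lt_succ_iff]

def dd (τ : Fin (N + 1) → ℤ) (m' : Fin N × Fin N → ℕ) (i : Fin N) : ℤ :=
  τ i.succ - inn m' i + outt m' i

lemma inn_bigM (m' : Fin N × Fin N → ℕ) (m0 : Fin N → ℕ) (i : Fin N) :
    inn (bigM m' m0 0 0) i.succ = (m0 i : ℤ) + inn m' i := by
  rw [inn_succ, bigM_zs]
  simp only [bigM_ss, inn]

lemma outt_bigM (m' : Fin N × Fin N → ℕ) (m0 : Fin N → ℕ) (i : Fin N) :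
    outt (bigM m' m0 0 0) i.succ = outt m' i := by
  rw [outt_succ]
  simp only [bigM_ss, outt]

lemma outt_bigM_zero (m' : Fin N × Fin N → ℕ) (m0 : Fin N → ℕ) :
    outt (bigM m' m0 0 0) 0 = ∑ j, (m0 j : ℤ) := by
  rw [outt_zero]
  exact Finset.sum_congr rfl fun j _ => by rw [bigM_zs]

lemma Pc_bigM_iff (τ : Fin (N + 1) → ℤ) (h0 : 0 ≤ τ 0) (m' : Fin N × Fin N → ℕ)
    (m0 k' : Fin N → ℕ) :
    Pc τ (Fin.cons ((τ 0 + ∑ i, (m0 i : ℤ)).toNat) k', bigM m' m0 0 0) ↔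
      (Upper m' ∧ ∀ i, (m0 i : ℤ) + (k' i : ℤ) = dd τ m' i) := by
  have hk0 : (((τ 0 + ∑ i, (m0 i : ℤ)).toNat : ℤ)) = τ 0 + ∑ i, (m0 i : ℤ) := by
    rw [Int.toNat_of_nonneg]
    exact add_nonneg h0 (Finset.sum_nonneg fun i _ => by positivity)
  constructor
  · rintro ⟨hu, hb⟩
    dsimp only at hu hb
    constructor
    · intro p hp
      have h2 := hu (p.1.succ, p.2.succ)
        (fun h => hp (Fin.succ_lt_succ_iff.mp h))
      rwa [bigM_ss] at h2
    · intro i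
      have hbi := hb i.succ
      rw [Fin.cons_succ, inn_bigM, outt_bigM] at hbi
      rw [dd]
      linarith
  · rintro ⟨hu, hc⟩
    constructor
    · rintro ⟨p1, p2⟩ hp
      dsimp only at hp ⊢
      revert hp
      refine Fin.cases ?_ (fun i => ?_) p1 <;> refine Fin.cases ?_ (fun j => ?_) p2 <;> intro hp
      · rw [bigM_zz]
      · exact absurd (Fin.succ_pos j) hp
      · rw [bigM_sz]; rfl
      · rw [bigM_ss]
        exact hu (i, j) (fun h => hp (Fin.succ_lt_succ_iff.mpr h))
    · intro i
      dsimp only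
      refine Fin.cases ?_ (fun i => ?_) i
      · rw [Fin.cons_zero, inn_zero, outt_bigM_zero, hk0]
        ring
      · rw [Fin.cons_succ, inn_bigM, outt_bigM]
        have hci := hc i
        rw [dd] at hci
        linarith
lemma Wt_bigM (m' : Fin N × Fin N → ℕ) (m0 : Fin N → ℕ) :
    Wt (bigM m' m0 0 0) = (∏ i, cc (m0 i)) * Wt m' := by
  rw [Wt, Wt,
    Fintype.prod_prod_type (f := fun p : Fin (N + 1) × Fin (N + 1) =>
      if p.1 < p.2 then cc (bigM m' m0 0 0 p) else 1),
    Fintype.prod_prod_type (f := fun p : Fin N × Fin N =>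
      if p.1 < p.2 then cc (m' p) else 1),
    Fin.prod_univ_succ]
  congr 1
  · -- row 0
    rw [Fin.prod_univ_succ, if_neg (lt_irrefl (0 : Fin (N + 1))), one_mul]
    exact Finset.prod_congr rfl fun j _ => by
      rw [if_pos (Fin.succ_pos j), bigM_zs]
  · -- rows succ
    refine Finset.prod_congr rfl fun i _ => ?_
    rw [Fin.prod_univ_succ, if_neg (Fin.not_lt_zero i.succ), one_mul]
    refine Finset.prod_congr rfl fun j _ => ?_
    simp only [Fin.succ_lt_succ_iff, bigM_ss]

def Phi : ((Fin N × Fin N → ℕ) × ((Fin N → ℕ) × (Fin N → ℕ)) × (ℕ × ℕ × (Fin N → ℕ)))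
    ≃ ((Fin (N + 1) → ℕ) × (Fin (N + 1) × Fin (N + 1) → ℕ)) where
  toFun x := (Fin.cons x.2.2.1 x.2.1.2, bigM x.1 x.2.1.1 x.2.2.2.2 x.2.2.2.1)
  invFun km := (fun q => km.2 (q.1.succ, q.2.succ),
    ((fun j => km.2 (0, j.succ)), fun i => km.1 i.succ),
    (km.1 0, km.2 (0, 0), fun i => km.2 (i.succ, 0)))
  left_inv := by
    rintro ⟨m', ⟨m0, k'⟩, k0, e, mrow⟩
    simp only [Fin.cons_zero, Fin.cons_succ, bigM_zz, bigM_zs, bigM_sz, bigM_ss]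
  right_inv := by
    rintro ⟨k, m⟩
    dsimp only
    refine Prod.ext ?_ ?_
    · dsimp only
      funext i
      refine Fin.cases ?_ (fun i => ?_) i
      · rw [Fin.cons_zero]
      · rw [Fin.cons_succ]
    · dsimp only
      funext p
      obtain ⟨p1, p2⟩ := p
      refine Fin.cases ?_ (fun i => ?_) p1 <;> refine Fin.cases ?_ (fun j => ?_) p2
      · rw [bigM_zz]
      · rw [bigM_zs]
      · rw [bigM_sz]
      · rw [bigM_ss]
lemma F_support_finite (d : ℤ) :
    (Function.support fun x : ℕ × ℕ => if ((x.1 : ℤ) + (x.2 : ℤ) = d) then cc x.1 else 0).Finite := by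
  apply Set.Finite.subset (Finset.finite_toSet (Finset.HasAntidiagonal.antidiagonal d.toNat))
  intro x hx
  have hx' : (x.1 : ℤ) + (x.2 : ℤ) = d := by
    by_contra h
    exact hx (if_neg h)
  rw [Finset.mem_coe, Finset.HasAntidiagonal.mem_antidiagonal]
  omega

@[simp] lemma Phi_apply (x : (Fin N × Fin N → ℕ) × ((Fin N → ℕ) × (Fin N → ℕ)) × (ℕ × ℕ × (Fin N → ℕ))) :
    Phi x = (Fin.cons x.2.2.1 x.2.1.2, bigM x.1 x.2.1.1 x.2.2.2.2 x.2.2.2.1) := rfl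

lemma support_comp_finite {α β M : Type*} [Zero M] (g : α → β) (hg : Function.Injective g)
    (f : β → M) (hf : (Function.support f).Finite) :
    (Function.support fun x => f (g x)).Finite := by
  apply Set.Finite.subset (hf.preimage hg.injOn)
  intro x hx
  exact hx

lemma SS_succ (τ : Fin (N + 1) → ℤ) (h0 : 0 ≤ τ 0) :
    SS τ = X ^ (∑ i : Fin N, τ i.succ).toNat * SS (fun i => τ i.succ) := by
  classical
  set τ' : Fin N → ℤ := fun i => τ i.succ with hτ'
  set E : ℕ := (∑ i : Fin N, τ i.succ).toNat with hE
  -- sum of the `d`'s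
  have hsumdd : ∀ m' : Fin N × Fin N → ℕ, ∑ i : Fin N, dd τ m' i = ∑ i : Fin N, τ i.succ := by
    intro m'
    unfold dd
    rw [Finset.sum_add_distrib, Finset.sum_sub_distrib, sum_inn_eq_sum_outt]
    ring
  -- LHS computation
  have hfin : (Function.support (Sg τ)).Finite := Sg_support_finite τ
  have hfinPhi : (Function.support fun x => Sg τ (Phi x)).Finite :=
    support_comp_finite Phi Phi.injective _ hfin
  have LHS1 : SS τ = ∑ᶠ m' : Fin N × Fin N → ℕ, ∑ᶠ q : (Fin N → ℕ) × (Fin N → ℕ),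
      ∑ᶠ r : ℕ × ℕ × (Fin N → ℕ), Sg τ (Phi (m', q, r)) := by
    rw [SS, ← finsum_comp_equiv Phi]
    exact finsum_curry₃ _ hfinPhi
  have LHS2 : SS τ = ∑ᶠ m' : Fin N × Fin N → ℕ, (if Upper m' then Wt m' else 0)
      * ∏ i, (if 0 ≤ dd τ m' i then X ^ (dd τ m' i).toNat else 0) := by
    rw [LHS1]
    refine finsum_congr fun m' => ?_
    -- step 1 : collapse the innermost sum
    have step1 : ∀ q : (Fin N → ℕ) × (Fin N → ℕ),
        (∑ᶠ r : ℕ × ℕ × (Fin N → ℕ), Sg τ (Phi (m', q, r)))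
          = Sg τ (Phi (m', q, ((τ 0 + ∑ i, (q.1 i : ℤ)).toNat, 0, 0))) := by
      intro q
      apply finsum_eq_single
      intro r hr
      by_contra hne
      have hP : Pc τ (Phi (m', q, r)) := by
        by_contra h
        exact hne (if_neg h)
      obtain ⟨hu, hb⟩ := hP
      simp only [Phi_apply] at hu hb
      apply hr
      have he : r.2.1 = 0 := by
        have h2 := hu (0, 0) (lt_irrefl 0)
        rwa [bigM_zz] at h2
      have hmrow : r.2.2 = 0 := by
        funext i
        have h2 := hu (i.succ, 0) (Fin.not_lt_zero _)
        rw [bigM_sz] at h2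
        simpa using h2
      have hk0 : r.1 = (τ 0 + ∑ i, (q.1 i : ℤ)).toNat := by
        have h2 := hb 0
        rw [Fin.cons_zero, inn_zero, outt_zero] at h2
        have h3 : ∑ j : Fin N, ((bigM m' q.1 r.2.2 r.2.1) (0, j.succ) : ℤ)
            = ∑ j, (q.1 j : ℤ) :=
          Finset.sum_congr rfl fun j _ => by rw [bigM_zs]
        rw [h3] at h2
        omega
      exact Prod.ext hk0 (Prod.ext he hmrow)
    rw [finsum_congr step1]
    -- step 2 : rewrite the collapsed summand
    have step2 : ∀ q : (Fin N → ℕ) × (Fin N → ℕ),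
        Sg τ (Phi (m', q, ((τ 0 + ∑ i, (q.1 i : ℤ)).toNat, 0, 0)))
          = if (Upper m' ∧ ∀ i, (q.1 i : ℤ) + (q.2 i : ℤ) = dd τ m' i)
              then (∏ i, cc (q.1 i)) * Wt m' else 0 := by
      intro q
      have hPhi : Phi (m', q, ((τ 0 + ∑ i, (q.1 i : ℤ)).toNat, 0, 0))
          = (Fin.cons ((τ 0 + ∑ i, (q.1 i : ℤ)).toNat) q.2, bigM m' q.1 0 0) := rfl
      rw [Sg, hPhi]
      dsimp only
      exact if_congr (Pc_bigM_iff τ h0 m' q.1 q.2) (Wt_bigM m' q.1) rfl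
    rw [finsum_congr step2]
    -- step 3 : factor the remaining sum
    set F : Fin N → (ℕ × ℕ) → Polynomial ℤ :=
      fun i x => if ((x.1 : ℤ) + (x.2 : ℤ) = dd τ m' i) then cc x.1 else 0 with hF
    have hFfin : ∀ i, (Function.support (F i)).Finite := fun i => F_support_finite _
    have hsupF : (Function.support fun f : Fin N → ℕ × ℕ => ∏ i, F i (f i)).Finite :=
      Set.Finite.subset (Set.Finite.pi fun i => hFfin i) (support_pi_prod F)
    have hprod : ∀ f : Fin N → ℕ × ℕ,
        (if (Upper m' ∧ ∀ i, ((f i).1 : ℤ) + ((f i).2 : ℤ) = dd τ m' i)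
            then (∏ i, cc ((f i).1)) * Wt m' else 0)
          = (if Upper m' then Wt m' else 0) * ∏ i, F i (f i) := by
      intro f
      by_cases hU : Upper m'
      · by_cases hC : ∀ i, ((f i).1 : ℤ) + ((f i).2 : ℤ) = dd τ m' i
        · rw [if_pos ⟨hU, hC⟩, if_pos hU,
            show (∏ i, F i (f i)) = ∏ i, cc ((f i).1) from
              Finset.prod_congr rfl fun i _ => if_pos (hC i),
            mul_comm]
        · push_neg at hC
          obtain ⟨i, hi⟩ := hC
          rw [if_neg (by tauto),
            Finset.prod_eq_zero (Finset.mem_univ i) (show F i (f i) = 0 from if_neg hi),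
            mul_zero]
      · rw [if_neg (by tauto), if_neg hU, zero_mul]
    calc ∑ᶠ q : (Fin N → ℕ) × (Fin N → ℕ),
          (if (Upper m' ∧ ∀ i, (q.1 i : ℤ) + (q.2 i : ℤ) = dd τ m' i)
            then (∏ i, cc (q.1 i)) * Wt m' else 0)
        = ∑ᶠ f : Fin N → ℕ × ℕ,
            (if (Upper m' ∧ ∀ i, ((f i).1 : ℤ) + ((f i).2 : ℤ) = dd τ m' i)
              then (∏ i, cc ((f i).1)) * Wt m' else 0) :=
          (finsum_comp_equiv (Equiv.arrowProdEquivProdArrow (Fin N) (fun _ => ℕ) (fun _ => ℕ))).symm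
      _ = ∑ᶠ f : Fin N → ℕ × ℕ, (if Upper m' then Wt m' else 0) * ∏ i, F i (f i) :=
          finsum_congr hprod
      _ = (if Upper m' then Wt m' else 0) * ∑ᶠ f : Fin N → ℕ × ℕ, ∏ i, F i (f i) :=
          (mul_finsum _ _).symm
      _ = (if Upper m' then Wt m' else 0) * ∏ i, ∑ᶠ x, F i x := by
          rw [finsum_pi_prod F hFfin]
      _ = (if Upper m' then Wt m' else 0)
            * ∏ i, (if 0 ≤ dd τ m' i then X ^ (dd τ m' i).toNat else 0) := by
          congr 1
          exact Finset.prod_congr rfl fun i _ => finsum_pair (dd τ m' i)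
  -- RHS computation
  have hfin' : (Function.support (Sg τ')).Finite := Sg_support_finite τ'
  have hPc' : ∀ (m' : Fin N × Fin N → ℕ) (k' : Fin N → ℕ),
      Pc τ' (k', m') ↔ (Upper m' ∧ ∀ i, (k' i : ℤ) = dd τ m' i) := by
    intro m' k'
    have ht : ∀ i, τ' i = τ i.succ := fun i => rfl
    constructor
    · rintro ⟨hu, hb⟩
      refine ⟨hu, fun i => ?_⟩
      have h2 := hb i
      rw [ht i] at h2
      rw [dd]
      dsimp only at h2
      linarith
    · rintro ⟨hu, hb⟩
      refine ⟨hu, fun i => ?_⟩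
      have h2 := hb i
      rw [dd] at h2
      rw [ht i]
      dsimp only
      linarith
  have RHSinner : ∀ m' : Fin N × Fin N → ℕ, (∑ᶠ k' : Fin N → ℕ, Sg τ' (k', m'))
      = if (Upper m' ∧ ∀ i, 0 ≤ dd τ m' i) then Wt m' else 0 := by
    intro m'
    by_cases h : Upper m' ∧ ∀ i, 0 ≤ dd τ m' i
    · rw [if_pos h]
      rw [finsum_eq_single _ (fun i : Fin N => (dd τ m' i).toNat) ?_]
      · rw [Sg, if_pos]
        exact (hPc' m' _).mpr ⟨h.1, fun i => Int.toNat_of_nonneg (h.2 i)⟩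
      · intro k' hk
        by_contra hne
        have hP : Pc τ' (k', m') := by
          by_contra hh
          exact hne (if_neg hh)
        rw [hPc'] at hP
        apply hk
        funext i
        have := hP.2 i
        omega
    · rw [if_neg h]
      apply finsum_eq_zero_of_forall_eq_zero
      intro k'
      rw [Sg, if_neg]
      intro hP
      rw [hPc'] at hP
      refine h ⟨hP.1, fun i => ?_⟩
      rw [← hP.2 i]
      positivity
  have RHS1 : SS τ' = ∑ᶠ m' : Fin N × Fin N → ℕ,
      (if (Upper m' ∧ ∀ i, 0 ≤ dd τ m' i) then Wt m' else 0) := by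
    have hcur : SS τ' = ∑ᶠ m' : Fin N × Fin N → ℕ, ∑ᶠ k' : Fin N → ℕ, Sg τ' (k', m') := by
      rw [SS, ← finsum_comp_equiv (Equiv.prodComm (Fin N × Fin N → ℕ) (Fin N → ℕ))]
      exact finsum_curry _
        (support_comp_finite _ (Equiv.prodComm (Fin N × Fin N → ℕ) (Fin N → ℕ)).injective _ hfin')
    rw [hcur]
    exact finsum_congr RHSinner
  have hfinM : (Function.support fun m' : Fin N × Fin N → ℕ =>
      (if (Upper m' ∧ ∀ i, 0 ≤ dd τ m' i) then Wt m' else 0)).Finite := by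
    apply Set.Finite.subset (hfin'.image Prod.snd)
    intro m' hm'
    have hcond : Upper m' ∧ ∀ i, 0 ≤ dd τ m' i := by
      by_contra h
      exact hm' (if_neg h)
    have hm2 : (if (Upper m' ∧ ∀ i, 0 ≤ dd τ m' i) then Wt m' else 0) ≠ 0 := hm'
    rw [if_pos hcond] at hm2
    have hSg : Sg τ' ((fun i : Fin N => (dd τ m' i).toNat), m') ≠ 0 := by
      rw [Sg, if_pos ((hPc' m' (fun i : Fin N => (dd τ m' i).toNat)).mpr
        ⟨hcond.1, fun i => Int.toNat_of_nonneg (hcond.2 i)⟩)]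
      exact hm2
    exact ⟨_, hSg, rfl⟩
  -- put the two sides together
  rw [LHS2, RHS1, mul_finsum _ _]
  refine finsum_congr fun m' => ?_
  by_cases hU : Upper m'
  · by_cases hD : ∀ i, 0 ≤ dd τ m' i
    · rw [if_pos hU, if_pos ⟨hU, hD⟩,
        show (∏ i, (if 0 ≤ dd τ m' i then X ^ (dd τ m' i).toNat else 0))
            = ∏ i, (X : Polynomial ℤ) ^ (dd τ m' i).toNat from
          Finset.prod_congr rfl fun i _ => if_pos (hD i),
        Finset.prod_pow_eq_pow_sum]
      have hcast : ((∑ i, (dd τ m' i).toNat : ℕ) : ℤ) = ∑ i : Fin N, τ i.succ := by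
        rw [Nat.cast_sum, ← hsumdd m']
        exact Finset.sum_congr rfl fun i _ => Int.toNat_of_nonneg (hD i)
      have hEeq : ∑ i, (dd τ m' i).toNat = E := by
        rw [hE]
        omega
      rw [hEeq, mul_comm]
    · push_neg at hD
      obtain ⟨i, hi⟩ := hD
      rw [Finset.prod_eq_zero (Finset.mem_univ i)
          (show (if 0 ≤ dd τ m' i then (X : Polynomial ℤ) ^ (dd τ m' i).toNat else 0) = 0
            from if_neg (by omega)), mul_zero,
        if_neg (fun h => absurd (h.2 i) (by omega)), mul_zero]
  · rw [if_neg hU, if_neg (by tauto), zero_mul, mul_zero]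

lemma list_sum_get (lam : List ℕ) : ∑ i : Fin lam.length, lam.get i = lam.sum := by
  simp only [List.get_eq_getElem]
  exact Fin.sum_univ_getElem lam

end FhlAux

lemma Fhl_eq_SS (lam : List ℕ) :
    Fhl lam = SS (fun i : Fin lam.length => (lam.get i : ℤ)) := by
  rw [Fhl, SS]
  refine finsum_congr fun km => ?_
  refine if_congr ?_ ?_ rfl
  · constructor
    · rintro ⟨hu, _, hb⟩
      exact ⟨hu, hb⟩
    · rintro ⟨hu, hb⟩
      refine ⟨hu, ?_, hb⟩
      have h1 : ∑ i, (km.1 i : ℤ) = ∑ i : Fin lam.length, ((lam.get i : ℤ)) := Pc_sum hb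
      have h2 : ∑ i, km.1 i = ∑ i : Fin lam.length, lam.get i := by exact_mod_cast h1
      rw [h2, list_sum_get]
  · refine Finset.prod_congr rfl fun p _ => ?_
    by_cases h1 : p.1 < p.2 <;> by_cases h2 : km.2 p = 0 <;> simp [cc, h1, h2]


/-- The recursion `F_{(λ₁,…,λ_l)} = t^{λ₂+⋯+λ_l} · F_{(λ₂,…,λ_l)}` in `ℤ[t]`, for every
partition `λ = (λ₁, …, λ_l)` of length `l ≥ 1`. -/
theorem Fhl_recursion (lam : List ℕ) (h0 : lam ≠ [])
    (h1 : lam.Pairwise (· ≥ ·)) (h2 : ∀ x ∈ lam, 0 < x) :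
    Fhl lam = X ^ lam.tail.sum * Fhl lam.tail := by
  rcases lam with _ | ⟨a, tl⟩
  · exact absurd rfl h0
  · show Fhl (a :: tl) = X ^ tl.sum * Fhl tl
    rw [Fhl_eq_SS (a :: tl), Fhl_eq_SS tl]
    have key := SS_succ (N := tl.length) (fun i => ((a :: tl).get i : ℤ))
      (Int.natCast_nonneg _)
    have hsucc : ∀ i : Fin tl.length, (a :: tl).get i.succ = tl.get i := fun i => rfl
    have hexp : (∑ i : Fin tl.length, ((a :: tl).get i.succ : ℤ)).toNat = tl.sum := by
      have : ∑ i : Fin tl.length, ((a :: tl).get i.succ : ℤ)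
          = ((∑ i : Fin tl.length, tl.get i : ℕ) : ℤ) := by
        rw [Nat.cast_sum]
        exact Finset.sum_congr rfl fun i _ => by rw [hsucc i]
      rw [this, Int.toNat_natCast, list_sum_get]
    have hfun : (fun i : Fin tl.length => ((a :: tl).get i.succ : ℤ))
        = fun i : Fin tl.length => (tl.get i : ℤ) := by
      funext i
      rw [hsucc i]
    show SS (N := tl.length + 1) (fun i => ((a :: tl).get i : ℤ))
        = X ^ tl.sum * SS (fun i : Fin tl.length => (tl.get i : ℤ))
    rw [key, hexp, hfun]
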